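/- (Lemma A.1: mass of badly-fit classes.) Let D_S be a probability measure on X with measurable ground-truth labeling y : X → {1,…,C}, with D_S{y = i} > 0 for each i, and class-conditionals D_{S_i}. Let h, h_pl : X → {1,…,C} be measurable classifiers and q, γ ∈ (0,1). Define I = {i ∈ {1,…,C} : P_{D_{S_i}}[h ≠ h_pl] − ε_{D_{S_i}}(h_pl) ≤ γ}, and assume that for each i ∈ I one has P_{D_{S_i}}[M1^i] ≤ q. Then Σ_{i∈{1,…,C}\I} D_S{y = i} ≤ (1/γ)(P_{D_S}[h ≠ h_pl] − ε_{D_S}(h_pl) + q). -/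

import Mathlib

open MeasureTheory ProbabilityTheory Set

open scoped ProbabilityTheory Classical

noncomputable section

/-- Lemma A.1: mass of badly-fit classes.
Let D_S be a probability measure with measurable ground-truth labeling y, D_S{y=i} > 0 for
each class, and class-conditionals D_{S_i}. With
I = {i : P_{D_{S_i}}[h ≠ h_pl] − ε_{D_{S_i}}(h_pl) ≤ γ}, assuming P_{D_{S_i}}[M1^i] ≤ q for
i ∈ I, we get Σ_{i∉I} D_S{y=i} ≤ (1/γ)(P_{D_S}[h ≠ h_pl] − ε_{D_S}(h_pl) + q). -/
theorem stmt_3 {C : ℕ} {X : Type*} [MeasurableSpace X]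
    (DS : Measure X) [IsProbabilityMeasure DS]
    (y : X → Fin C) (hy : Measurable y)
    (hpos : ∀ i : Fin C, 0 < DS {x | y x = i})
    (DS_ : Fin C → Measure X) (hDS_ : ∀ i, DS_ i = DS[|{x | y x = i}])
    (h h_pl : X → Fin C) (hh : Measurable h) (hhpl : Measurable h_pl)
    (q γ : ℝ) (hq : q ∈ Set.Ioo (0 : ℝ) 1) (hγ : γ ∈ Set.Ioo (0 : ℝ) 1)
    (I : Set (Fin C))
    (hI : I = {i | ((DS_ i) {x | h x ≠ h_pl x}).toReal -
      ((DS_ i) {x | h_pl x ≠ y x}).toReal ≤ γ})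
    (hM1 : ∀ i ∈ I, ((DS_ i) {x | h x = h_pl x ∧ h x ≠ i}).toReal ≤ q) :
    ∑ i ∈ Finset.univ.filter (· ∉ I), (DS {x | y x = i}).toReal ≤
      (1 / γ) * ((DS {x | h x ≠ h_pl x}).toReal -
        (DS {x | h_pl x ≠ y x}).toReal + q) := by
  -- basic measurability
  have hs : ∀ i : Fin C, MeasurableSet {x | y x = i} := fun i =>
    hy (measurableSet_singleton i)
  have hA : MeasurableSet {x | h x ≠ h_pl x} :=
    (measurableSet_eq_fun hh hhpl).compl
  have hB : MeasurableSet {x | h_pl x ≠ y x} :=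
    (measurableSet_eq_fun hhpl hy).compl
  -- notation
  set s : Fin C → Set X := fun i => {x | y x = i} with hsdef
  set p : Fin C → ℝ := fun i => (DS (s i)).toReal with hpdef
  have hppos : ∀ i, 0 < p i := fun i =>
    ENNReal.toReal_pos (hpos i).ne' (measure_ne_top _ _)
  -- conditional measure formula
  have key : ∀ (i : Fin C) (A : Set X),
      ((DS_ i) A).toReal = (DS (s i ∩ A)).toReal / p i := by
    intro i A
    rw [hDS_ i, ProbabilityTheory.cond_apply (hs i) DS A, ENNReal.toReal_mul,
      ENNReal.toReal_inv]
    rw [div_eq_inv_mul]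
  set a : Fin C → ℝ := fun i => (DS (s i ∩ {x | h x ≠ h_pl x})).toReal with hadef
  set b : Fin C → ℝ := fun i => (DS (s i ∩ {x | h_pl x ≠ y x})).toReal with hbdef
  set m : Fin C → ℝ := fun i => (DS (s i ∩ {x | h x = h_pl x ∧ h x ≠ i})).toReal with hmdef
  -- pointwise inequality: b i ≤ a i + m i
  have hbam : ∀ i, b i ≤ a i + m i := by
    intro i
    have hsub : s i ∩ {x | h_pl x ≠ y x} ⊆
        (s i ∩ {x | h x ≠ h_pl x}) ∪ (s i ∩ {x | h x = h_pl x ∧ h x ≠ i}) := by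
      rintro x ⟨hxi, hxpl⟩
      by_cases hc : h x = h_pl x
      · right
        refine ⟨hxi, hc, ?_⟩
        rw [hc]
        simpa [Set.mem_setOf_eq.mp hxi] using hxpl
      · left; exact ⟨hxi, hc⟩
    have h1 : DS (s i ∩ {x | h_pl x ≠ y x}) ≤
        DS (s i ∩ {x | h x ≠ h_pl x}) + DS (s i ∩ {x | h x = h_pl x ∧ h x ≠ i}) :=
      le_trans (measure_mono hsub) (measure_union_le _ _)
    have := ENNReal.toReal_mono (by
      exact ENNReal.add_ne_top.mpr ⟨measure_ne_top _ _, measure_ne_top _ _⟩) h1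
    simpa [hadef, hbdef, hmdef, ENNReal.toReal_add (measure_ne_top _ _) (measure_ne_top _ _)]
      using this
  -- for i ∈ I : m i ≤ q * p i ; hence a i - b i ≥ -(q * p i)
  have hIin : ∀ i ∈ I, -(q * p i) ≤ a i - b i := by
    intro i hi
    have hm := hM1 i hi
    rw [key i _] at hm
    have : m i ≤ q * p i := by
      rw [div_le_iff₀ (hppos i)] at hm
      linarith [hm]
    linarith [hbam i]
  -- for i ∉ I : γ * p i ≤ a i - b i
  have hIout : ∀ i ∉ I, γ * p i ≤ a i - b i := by
    intro i hi
    rw [hI] at hi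
    simp only [Set.mem_setOf_eq, not_le] at hi
    rw [key i {x | h x ≠ h_pl x}, key i {x | h_pl x ≠ y x}] at hi
    have := hi.le
    rw [div_sub_div_same, le_div_iff₀ (hppos i)] at this
    linarith [this]
  -- decompositions into classes
  have decomp : ∀ (A : Set X), MeasurableSet A →
      ∑ i : Fin C, (DS (s i ∩ A)).toReal = (DS A).toReal := by
    intro A hAm
    have hdisj : Pairwise (Function.onFun Disjoint (fun i => s i ∩ A)) := by
      intro i j hij
      refine Set.disjoint_left.mpr ?_
      rintro x ⟨hxi, -⟩ ⟨hxj, -⟩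
      exact hij (hxi.symm.trans hxj)
    have hU : ⋃ i, (s i ∩ A) = A := by
      ext x; simp [hsdef]
    have := measure_iUnion hdisj (fun i => (hs i).inter hAm) (μ := DS)
    rw [hU, tsum_fintype] at this
    rw [this, ENNReal.toReal_sum (fun i _ => measure_ne_top _ _)]
  have hsuma : ∑ i : Fin C, a i = (DS {x | h x ≠ h_pl x}).toReal := decomp _ hA
  have hsumb : ∑ i : Fin C, b i = (DS {x | h_pl x ≠ y x}).toReal := decomp _ hB
  have hsump : ∑ i : Fin C, p i = 1 := by
    have hU : ⋃ i, s i = Set.univ := by ext x; simp [hsdef]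
    have hdisj : Pairwise (Function.onFun Disjoint s) := by
      intro i j hij
      refine Set.disjoint_left.mpr ?_
      rintro x hxi hxj
      exact hij (hxi.symm.trans hxj)
    have := measure_iUnion hdisj hs (μ := DS)
    rw [hU, tsum_fintype, measure_univ] at this
    have := congrArg ENNReal.toReal this.symm
    rw [ENNReal.toReal_sum (fun i _ => measure_ne_top _ _)] at this
    simpa using this
  -- main estimate
  set T := Finset.univ.filter (fun i : Fin C => i ∉ I) with hT
  have hmain : γ * ∑ i ∈ T, p i ≤
      (DS {x | h x ≠ h_pl x}).toReal - (DS {x | h_pl x ≠ y x}).toReal + q := by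
    have h1 : γ * ∑ i ∈ T, p i ≤ ∑ i ∈ T, (a i - b i) := by
      rw [Finset.mul_sum]
      refine Finset.sum_le_sum fun i hi => ?_
      exact hIout i (by simpa [hT] using hi)
    have hsplit : ∑ i ∈ T, (a i - b i) + ∑ i ∈ Tᶜ, (a i - b i)
        = ∑ i : Fin C, (a i - b i) := Finset.sum_add_sum_compl T _
    have h2 : -q ≤ ∑ i ∈ Tᶜ, (a i - b i) := by
      have hq1 : ∑ i ∈ Tᶜ, -(q * p i) ≤ ∑ i ∈ Tᶜ, (a i - b i) := by
        refine Finset.sum_le_sum fun i hi => ?_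
        have : i ∈ I := by
          simp only [hT, Finset.mem_compl, Finset.mem_filter, Finset.mem_univ,
            true_and, not_not] at hi
          exact hi
        exact hIin i this
      have hq2 : -q ≤ ∑ i ∈ Tᶜ, -(q * p i) := by
        have : ∑ i ∈ Tᶜ, q * p i ≤ q * 1 := by
          rw [← hsump, ← Finset.sum_add_sum_compl T p, mul_add, ← Finset.mul_sum]
          have h3 : 0 ≤ q * ∑ i ∈ T, p i :=
            mul_nonneg hq.1.le (Finset.sum_nonneg fun i _ => (hppos i).le)
          linarith
        rw [Finset.sum_neg_distrib]
        linarith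
      linarith
    have h3 : ∑ i : Fin C, (a i - b i) =
        (DS {x | h x ≠ h_pl x}).toReal - (DS {x | h_pl x ≠ y x}).toReal := by
      rw [Finset.sum_sub_distrib, hsuma, hsumb]
    linarith
  rw [one_div, ← div_eq_inv_mul, le_div_iff₀ hγ.1]
  calc (∑ i ∈ T, p i) * γ = γ * ∑ i ∈ T, p i := mul_comm _ _
    _ ≤ _ := hmain
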